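/- Let (X,⊥) be an irredundant orthogonality space of finite rank satisfying condition (L1). Let D ⊆ X be a set of mutually orthogonal elements and let e ∈ X with e ∉ D^⊥⊥. Then there exists f ∈ X such that f ⊥ d for all d ∈ D and (D ∪ {e})^⊥⊥ = (D ∪ {f})^⊥⊥. -/

import Mathlib

variable {X : Type*}

/-- The orthocomplement of a subset of an orthogonality space. -/
def ortho (perp : X → X → Prop) (A : Set X) : Set X := {e | ∀ a ∈ A, perp e a}

/-- A subset is orthoclosed if it coincides with its double orthocomplement. -/
def OrthoClosed (perp : X → X → Prop) (A : Set X) : Prop :=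
  ortho perp (ortho perp A) = A

/-- The orthogonality space `(X, perp)` has rank `m`: it contains `m` mutually
orthogonal elements but not `m + 1`. -/
def HasRank (perp : X → X → Prop) (m : ℕ) : Prop :=
  (∃ D : Finset X, D.card = m ∧ (D : Set X).Pairwise perp) ∧
    ∀ D : Finset X, (D : Set X).Pairwise perp → D.card ≤ m

/-- Irredundance: elements with the same orthocomplement coincide. -/
def Irredundant (perp : X → X → Prop) : Prop :=
  ∀ e f : X, ortho perp {e} = ortho perp {f} → e = f

/-- Condition (L₁). -/
def CondL1 (perp : X → X → Prop) : Prop :=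
  ∀ e f : X, f ≠ e → ∃ g : X, perp g e ∧ ortho perp {e, g} = ortho perp {e, f}

/-- Condition (L₂). -/
def CondL2 (perp : X → X → Prop) : Prop :=
  ∀ e g : X, perp g e → ∃ f : X, f ≠ e ∧ f ≠ g ∧ ortho perp {e, g} = ortho perp {e, f}

/-- In an irredundant orthogonality space of finite rank
satisfying (L₁), for any orthogonal subset `D` and any `e ∉ D^⊥⊥` there is an
`f ⊥ D` with `(D ∪ {e})^⊥⊥ = (D ∪ {f})^⊥⊥`. -/
theorem stmt5 {X : Type*} [Nonempty X] (perp : X → X → Prop)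
    (hsymm : ∀ x y : X, perp x y → perp y x)
    (hirr : ∀ x : X, ¬ perp x x)
    (hirred : Irredundant perp)
    (hrank : ∃ m : ℕ, 0 < m ∧ HasRank perp m)
    (hL1 : CondL1 perp)
    (D : Set X) (hD : D.Pairwise perp)
    (e : X) (he : e ∉ ortho perp (ortho perp D)) :
    ∃ f : X, (∀ d ∈ D, perp f d) ∧
      ortho perp (ortho perp (D ∪ {e})) = ortho perp (ortho perp (D ∪ {f})) := by
  classical
  -- D is finite, by the rank bound
  obtain ⟨m, -, ⟨-, hbound⟩⟩ := hrank
  have hDfin : D.Finite := by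
    by_contra h
    have hinf : D.Infinite := h
    obtain ⟨t, hts, htc⟩ := hinf.exists_subset_card_eq (m + 1)
    have := hbound t (hD.mono hts)
    omega
  -- key induction on the number of elements of D not orthogonal to the candidate
  have key : ∀ n : ℕ, ∀ c : X,
      ortho perp (D ∪ {c}) = ortho perp (D ∪ {e}) →
      {d ∈ D | ¬ perp c d}.ncard ≤ n →
      ∃ f : X, (∀ d ∈ D, perp f d) ∧ ortho perp (D ∪ {f}) = ortho perp (D ∪ {e}) := by
    intro n
    induction n with
    | zero =>
      intro c hc hcard
      have hBfin : {d ∈ D | ¬ perp c d}.Finite := hDfin.subset (fun x hx => hx.1)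
      have hB : {d ∈ D | ¬ perp c d} = ∅ := by
        rw [← Set.ncard_eq_zero hBfin]; omega
      refine ⟨c, fun d hd => ?_, hc⟩
      by_contra hnot
      exact absurd hB (Set.nonempty_iff_ne_empty.mp ⟨d, hd, hnot⟩)
    | succ n ih =>
      intro c hc hcard
      by_cases hall : ∀ d ∈ D, perp c d
      · exact ⟨c, hall, hc⟩
      push_neg at hall
      obtain ⟨d, hdD, hcd⟩ := hall
      -- c ≠ d
      have hcne : c ≠ d := by
        rintro rfl
        have : D ∪ {c} = D := by
          apply Set.union_eq_self_of_subset_right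
          simpa using hdD
        rw [this] at hc
        apply he
        intro a ha
        have : a ∈ ortho perp (D ∪ {e}) := hc ▸ ha
        exact hsymm _ _ (this e (Or.inr rfl))
      obtain ⟨g, hgd, hog⟩ := hL1 d c hcne
      -- the replacement preserves the orthocomplement
      have hrep : ortho perp (D ∪ {g}) = ortho perp (D ∪ {c}) := by
        ext x
        constructor
        · intro hx
          have hxD : ∀ a ∈ D, perp x a := fun a ha => hx a (Or.inl ha)
          have hxg : perp x g := hx g (Or.inr rfl)
          have hxdg : x ∈ ortho perp {d, g} := by
            rintro a (rfl | rfl)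
            · exact hxD _ hdD
            · exact hxg
          have hxc : perp x c := (hog ▸ hxdg) c (Or.inr rfl)
          rintro a (ha | rfl)
          · exact hxD a ha
          · exact hxc
        · intro hx
          have hxD : ∀ a ∈ D, perp x a := fun a ha => hx a (Or.inl ha)
          have hxc : perp x c := hx c (Or.inr rfl)
          have hxdc : x ∈ ortho perp {d, c} := by
            rintro a (rfl | rfl)
            · exact hxD _ hdD
            · exact hxc
          have hxg : perp x g := (hog.symm ▸ hxdc) g (Or.inr rfl)
          rintro a (ha | rfl)
          · exact hxD a ha
          · exact hxg
      -- the bad set shrinks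
      have hsub : {d' ∈ D | ¬ perp g d'} ⊆ {d' ∈ D | ¬ perp c d'} \ {d} := by
        rintro d' ⟨hd'D, hgd'⟩
        have hne : d' ≠ d := by rintro rfl; exact hgd' hgd
        refine ⟨⟨hd'D, fun hcd' => ?_⟩, hne⟩
        have hd'dc : d' ∈ ortho perp {d, c} := by
          rintro a (rfl | rfl)
          · exact hD hd'D hdD hne
          · exact hsymm _ _ hcd'
        exact hgd' (hsymm _ _ ((hog.symm ▸ hd'dc) g (Or.inr rfl)))
      have hBfin : {d' ∈ D | ¬ perp c d'}.Finite := hDfin.subset (fun x hx => hx.1)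
      have hdB : d ∈ {d' ∈ D | ¬ perp c d'} := ⟨hdD, hcd⟩
      have hcard' : {d' ∈ D | ¬ perp g d'}.ncard ≤ n := by
        have h1 : {d' ∈ D | ¬ perp g d'}.ncard ≤ ({d' ∈ D | ¬ perp c d'} \ {d}).ncard :=
          Set.ncard_le_ncard hsub (hBfin.subset Set.diff_subset)
        have h2 : ({d' ∈ D | ¬ perp c d'} \ {d}).ncard
            = {d' ∈ D | ¬ perp c d'}.ncard - 1 := Set.ncard_diff_singleton_of_mem hdB
        have h3 : 0 < {d' ∈ D | ¬ perp c d'}.ncard := (Set.ncard_pos hBfin).mpr ⟨d, hdB⟩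
        omega
      exact ih g (hrep.trans hc) hcard'
  obtain ⟨f, hf, hfe⟩ := key {d ∈ D | ¬ perp e d}.ncard e rfl le_rfl
  exact ⟨f, hf, by rw [hfe]⟩
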